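/- Let K be a field, q ∈ K* not a root of unity, a ∈ K[h,h⁻¹] not invertible, and A = A(a(h),q) the quantum generalized Weyl algebra generated by x, y, h^{±1} with relations xh = qhx, yh = q⁻¹hy, xy = a(qh), yx = a(h). If ψ is a K-algebra endomorphism of A with ψ(h) = α ∈ K* (a scalar), then ψ(x) = 0, ψ(y) = 0, and α and qα are both roots of a(h). -/

import Mathlib

/-- Integer power of an element `h` of a ring, using a chosen "inverse" `h'` for
negative exponents. -/
noncomputable def zpowP {A : Type*} [Monoid A] (h h' : A) (i : ℤ) : A :=
  if 0 ≤ i then h ^ i.toNat else h' ^ (-i).toNat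

/-- Evaluation of the Laurent polynomial `a(s·h) = Σ aᵢ sⁱ hⁱ` at an element `h`
of a `K`-algebra with chosen inverse `h'`; here `a : ℤ →₀ K` records the
coefficients of `a`. -/
noncomputable def evalP {K A : Type*} [Field K] [Ring A] [Algebra K A]
    (a : ℤ →₀ K) (s : K) (h h' : A) : A :=
  a.sum fun i c => (c * s ^ i) • zpowP h h' i

/-- The defining relations of the quantum generalized Weyl algebra `A(a(h),q)`:
generators `x = ι 0`, `y = ι 1`, `h = ι 2`, `h⁻¹ = ι 3`, and relations
`xh = qhx`, `yh = q⁻¹hy`, `hh⁻¹ = h⁻¹h = 1`, `xy = a(qh)`, `yx = a(h)`. -/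
inductive relG (K : Type*) [Field K] (q : K) (a : ℤ →₀ K) :
    FreeAlgebra K (Fin 4) → FreeAlgebra K (Fin 4) → Prop
  | xh : relG K q a (FreeAlgebra.ι K 0 * FreeAlgebra.ι K 2)
      (q • (FreeAlgebra.ι K 2 * FreeAlgebra.ι K 0))
  | yh : relG K q a (FreeAlgebra.ι K 1 * FreeAlgebra.ι K 2)
      (q⁻¹ • (FreeAlgebra.ι K 2 * FreeAlgebra.ι K 1))
  | hinv : relG K q a (FreeAlgebra.ι K 2 * FreeAlgebra.ι K 3) 1
  | invh : relG K q a (FreeAlgebra.ι K 3 * FreeAlgebra.ι K 2) 1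
  | xy : relG K q a (FreeAlgebra.ι K 0 * FreeAlgebra.ι K 1)
      (evalP a q (FreeAlgebra.ι K 2) (FreeAlgebra.ι K 3))
  | yx : relG K q a (FreeAlgebra.ι K 1 * FreeAlgebra.ι K 0)
      (evalP a 1 (FreeAlgebra.ι K 2) (FreeAlgebra.ι K 3))

/-- The quantum generalized Weyl algebra `A(a(h),q)`. -/
abbrev GWA (K : Type*) [Field K] (q : K) (a : ℤ →₀ K) := RingQuot (relG K q a)

/-- The images of the generators `x, y, h, h⁻¹` in `A(a(h),q)`. -/
noncomputable def gwaGen (K : Type*) [Field K] (q : K) (a : ℤ →₀ K) (i : Fin 4) :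
    GWA K q a :=
  RingQuot.mkAlgHom K (relG K q a) (FreeAlgebra.ι K i)

section aux
variable {K : Type*} [Field K]

lemma map_zpowP {A B : Type*} [Ring A] [Algebra K A] [Ring B] [Algebra K B]
    (f : A →ₐ[K] B) (h h' : A) (i : ℤ) : f (zpowP h h' i) = zpowP (f h) (f h') i := by
  unfold zpowP; split <;> rw [map_pow]

lemma map_evalP {A B : Type*} [Ring A] [Algebra K A] [Ring B] [Algebra K B]
    (f : A →ₐ[K] B) (a : ℤ →₀ K) (s : K) (h h' : A) :
    f (evalP a s h h') = evalP a s (f h) (f h') := by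
  unfold evalP
  rw [map_finsuppSum]
  exact Finsupp.sum_congr fun i _ => by rw [map_smul, map_zpowP]

lemma zpowP_scalar (α : K) (i : ℤ) : zpowP α α⁻¹ i = α ^ i := by
  unfold zpowP
  split_ifs with h
  · rw [← zpow_natCast, Int.toNat_of_nonneg h]
  · rw [← zpow_natCast, Int.toNat_of_nonneg (by omega), zpow_neg, inv_zpow, inv_inv]

lemma evalP_scalar {A : Type*} [Ring A] [Algebra K A] (a : ℤ →₀ K) (s α : K) :
    evalP a s (algebraMap K (GWA K q a) α) (algebraMap K (GWA K q a) α⁻¹)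
      = algebraMap K (GWA K q a) (a.sum fun i c => c * s ^ i * α ^ i) := by
  unfold evalP
  rw [map_finsuppSum]
  refine Finsupp.sum_congr fun i _ => ?_
  have h1 : zpowP (algebraMap K (GWA K q a) α) (algebraMap K (GWA K q a) α⁻¹) i = algebraMap K (GWA K q a) (α ^ i) := by
    rw [← zpowP_scalar α i]; unfold zpowP; split <;> rw [map_pow]
  rw [h1, map_mul, ← Algebra.smul_def]

/-! ### A representation of the GWA on `ℤ →₀ K` -/

variable (K) in
noncomputable def opH : (ℤ →₀ K) →ₗ[K] (ℤ →₀ K) := Finsupp.lmapDomain K K (· + 1)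

variable (K) in
noncomputable def opH' : (ℤ →₀ K) →ₗ[K] (ℤ →₀ K) := Finsupp.lmapDomain K K (· + (-1))

noncomputable def opX (q : K) : (ℤ →₀ K) →ₗ[K] (ℤ →₀ K) :=
  Finsupp.lsum K fun n => q ^ n • Finsupp.lsingle n

noncomputable def opY (q : K) (a : ℤ →₀ K) : (ℤ →₀ K) →ₗ[K] (ℤ →₀ K) :=
  Finsupp.lsum K fun n => a.sum fun i c => (q ^ (-n) * c) • Finsupp.lsingle (n + i)

lemma opH_single (n : ℤ) (c : K) : opH K (Finsupp.single n c) = Finsupp.single (n + 1) c := by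
  rw [opH, Finsupp.lmapDomain_apply, Finsupp.mapDomain_single]

lemma opH'_single (n : ℤ) (c : K) : opH' K (Finsupp.single n c) = Finsupp.single (n - 1) c := by
  rw [opH', Finsupp.lmapDomain_apply, Finsupp.mapDomain_single, sub_eq_add_neg]

lemma opX_single (q : K) (n : ℤ) (c : K) :
    opX q (Finsupp.single n c) = q ^ n • Finsupp.single n c := by
  rw [opX, Finsupp.lsum_single, LinearMap.smul_apply, Finsupp.lsingle_apply]

lemma opY_single (q : K) (a : ℤ →₀ K) (n : ℤ) (c : K) :
    opY q a (Finsupp.single n c)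
      = ∑ i ∈ a.support, (q ^ (-n) * a i) • Finsupp.single (n + i) c := by
  rw [opY, Finsupp.lsum_single]
  simp only [Finsupp.sum, LinearMap.sum_apply, LinearMap.smul_apply, Finsupp.lsingle_apply]

lemma opH_pow (k : ℕ) (n : ℤ) (c : K) :
    ((opH K) ^ k) (Finsupp.single n c) = Finsupp.single (n + k) c := by
  induction k generalizing n with
  | zero => simp
  | succ k ih =>
    rw [pow_succ', Module.End.mul_apply, ih, opH_single]
    congr 1; push_cast; ring

lemma opH'_pow (k : ℕ) (n : ℤ) (c : K) :
    ((opH' K) ^ k) (Finsupp.single n c) = Finsupp.single (n - k) c := by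
  induction k generalizing n with
  | zero => simp
  | succ k ih =>
    rw [pow_succ', Module.End.mul_apply, ih, opH'_single]
    congr 1; push_cast; ring

lemma zpowP_opH (i n : ℤ) (c : K) :
    zpowP (opH K) (opH' K) i (Finsupp.single n c) = Finsupp.single (n + i) c := by
  unfold zpowP
  split_ifs with h
  · rw [opH_pow, Int.toNat_of_nonneg h]
  · rw [opH'_pow, Int.toNat_of_nonneg (by omega)]
    congr 1; omega

lemma evalP_end_apply (a : ℤ →₀ K) (s : K) (v : ℤ →₀ K) :
    evalP a s (opH K) (opH' K) v
      = ∑ i ∈ a.support, (a i * s ^ i) • (zpowP (opH K) (opH' K) i v) := by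
  simp only [evalP, Finsupp.sum, LinearMap.sum_apply, LinearMap.smul_apply]

noncomputable def repGen (q : K) (a : ℤ →₀ K) : Fin 4 → Module.End K (ℤ →₀ K)
  | 0 => opX q
  | 1 => opY q a
  | 2 => opH K
  | 3 => opH' K

lemma rep_rel (q : K) (hq0 : q ≠ 0) (a : ℤ →₀ K) :
    ∀ ⦃u v : FreeAlgebra K (Fin 4)⦄, relG K q a u v →
      FreeAlgebra.lift K (repGen q a) u = FreeAlgebra.lift K (repGen q a) v := by
  intro u v r
  induction r with
  | xh =>
    simp only [map_mul, map_smul, FreeAlgebra.lift_ι_apply]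
    show opX q * opH K = q • (opH K * opX q)
    refine Finsupp.lhom_ext fun n c => ?_
    rw [Module.End.mul_apply, LinearMap.smul_apply, Module.End.mul_apply, opH_single, opX_single,
      opX_single, map_smul, opH_single, smul_smul, zpow_add_one₀ hq0, mul_comm q]
  | yh =>
    simp only [map_mul, map_smul, FreeAlgebra.lift_ι_apply]
    show opY q a * opH K = q⁻¹ • (opH K * opY q a)
    refine Finsupp.lhom_ext fun n c => ?_
    rw [Module.End.mul_apply, LinearMap.smul_apply, Module.End.mul_apply, opH_single, opY_single,
      opY_single, map_sum, Finset.smul_sum]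
    refine Finset.sum_congr rfl fun i _ => ?_
    rw [map_smul, opH_single, smul_smul, add_right_comm n 1 i]
    congr 1
    rw [show -(n + 1) = -1 + -n by ring, zpow_add₀ hq0, zpow_neg_one]
    ring
  | hinv =>
    simp only [map_mul, map_one, FreeAlgebra.lift_ι_apply]
    show opH K * opH' K = 1
    refine Finsupp.lhom_ext fun n c => ?_
    rw [Module.End.mul_apply, opH'_single, opH_single, Module.End.one_apply, sub_add_cancel]
  | invh =>
    simp only [map_mul, map_one, FreeAlgebra.lift_ι_apply]
    show opH' K * opH K = 1
    refine Finsupp.lhom_ext fun n c => ?_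
    rw [Module.End.mul_apply, opH_single, opH'_single, Module.End.one_apply, add_sub_cancel_right]
  | xy =>
    rw [map_mul, map_evalP (FreeAlgebra.lift K (repGen q a))]
    simp only [FreeAlgebra.lift_ι_apply]
    show opX q * opY q a = evalP a q (opH K) (opH' K)
    refine Finsupp.lhom_ext fun n c => ?_
    rw [Module.End.mul_apply, opY_single, map_sum, evalP_end_apply]
    refine Finset.sum_congr rfl fun i _ => ?_
    rw [map_smul, opX_single, smul_smul, zpowP_opH]
    congr 1
    have hc : q ^ (-n) * q ^ (n + i) = q ^ i := by
      rw [← zpow_add₀ hq0]; congr 1; ring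
    rw [← hc]; ring
  | yx =>
    rw [map_mul, map_evalP (FreeAlgebra.lift K (repGen q a))]
    simp only [FreeAlgebra.lift_ι_apply]
    show opY q a * opX q = evalP a 1 (opH K) (opH' K)
    refine Finsupp.lhom_ext fun n c => ?_
    rw [Module.End.mul_apply, opX_single, map_smul, opY_single, Finset.smul_sum, evalP_end_apply]
    refine Finset.sum_congr rfl fun i _ => ?_
    rw [smul_smul, zpowP_opH]
    congr 1
    have hc : q ^ n * q ^ (-n) = 1 := by
      rw [← zpow_add₀ hq0, add_neg_cancel, zpow_zero]
    rw [one_zpow, mul_one, ← mul_assoc, hc, one_mul]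

lemma gwa_algebraMap_inj (q : K) (hq0 : q ≠ 0) (a : ℤ →₀ K) (c : K)
    (h : algebraMap K (GWA K q a) c = 0) : c = 0 := by
  let φ : GWA K q a →ₐ[K] Module.End K (ℤ →₀ K) :=
    RingQuot.liftAlgHom K ⟨FreeAlgebra.lift K (repGen q a), rep_rel q hq0 a⟩
  have h2 := congrArg φ h
  rw [map_zero, AlgHom.commutes] at h2
  have h3 := congrArg (fun f : Module.End K (ℤ →₀ K) => f (Finsupp.single (0:ℤ) (1:K))) h2
  simp only [Module.algebraMap_end_apply, Finsupp.smul_single, smul_eq_mul, mul_one,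
    LinearMap.zero_apply] at h3
  exact (Finsupp.single_eq_zero).mp h3

end aux

/-- Let `q ∈ K*` not be a root of unity and `a` a non-invertible Laurent polynomial
(encoded by its coefficients `a : ℤ →₀ K`; non-invertible means not a nonzero
monomial, i.e. the support does not have exactly one element).  If `ψ` is a
`K`-algebra endomorphism of `A(a(h),q)` with `ψ(h) = α` a nonzero scalar, then
`ψ(x) = 0`, `ψ(y) = 0`, and `α` and `qα` are both roots of `a(h)`. -/
theorem stmt_10 (K : Type*) [Field K] (q : K) (hq0 : q ≠ 0)
    (hq : ∀ n : ℤ, n ≠ 0 → q ^ n ≠ 1)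
    (a : ℤ →₀ K) (hainv : a.support.card ≠ 1)
    (ψ : GWA K q a →ₐ[K] GWA K q a) (α : K) (hα : α ≠ 0)
    (hψh : ψ (gwaGen K q a 2) = algebraMap K (GWA K q a) α) :
    ψ (gwaGen K q a 0) = 0 ∧ ψ (gwaGen K q a 1) = 0 ∧
      (a.sum fun i c => c * α ^ i) = 0 ∧
      (a.sum fun i c => c * (q * α) ^ i) = 0 := by
  have hq1 : q ≠ 1 := fun h => hq 1 one_ne_zero (by rw [h, one_zpow])
  set g0 := gwaGen K q a 0
  set g1 := gwaGen K q a 1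
  set g2 := gwaGen K q a 2
  set g3 := gwaGen K q a 3
  have rel_xh : g0 * g2 = q • (g2 * g0) := by
    have := RingQuot.mkAlgHom_rel K (relG.xh (q := q) (a := a))
    simpa only [map_mul, map_smul, gwaGen, g0, g1, g2, g3] using this
  have rel_yh : g1 * g2 = q⁻¹ • (g2 * g1) := by
    have := RingQuot.mkAlgHom_rel K (relG.yh (q := q) (a := a))
    simpa only [map_mul, map_smul, gwaGen, g0, g1, g2, g3] using this
  have rel_hinv : g2 * g3 = 1 := by
    have := RingQuot.mkAlgHom_rel K (relG.hinv (q := q) (a := a))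
    simpa only [map_mul, map_one, gwaGen, g0, g1, g2, g3] using this
  have rel_xy : g0 * g1 = evalP a q g2 g3 := by
    have := RingQuot.mkAlgHom_rel K (relG.xy (q := q) (a := a))
    simpa only [map_mul, map_evalP, gwaGen, g0, g1, g2, g3] using this
  have rel_yx : g1 * g0 = evalP a 1 g2 g3 := by
    have := RingQuot.mkAlgHom_rel K (relG.yx (q := q) (a := a))
    simpa only [map_mul, map_evalP, gwaGen, g0, g1, g2, g3] using this
  -- kill ψ g0
  have gen_kill : ∀ (s : K) (z : GWA K q a), s ≠ 1 →
      algebraMap K (GWA K q a) α * z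
        = algebraMap K (GWA K q a) s * (algebraMap K (GWA K q a) α * z) → z = 0 := by
    intro s z hs h
    have hne : α - s * α ≠ 0 := by
      rw [show α - s * α = α * (1 - s) by ring]
      exact mul_ne_zero hα (sub_ne_zero.mpr fun hh => hs hh.symm)
    have h2 : algebraMap K (GWA K q a) (α - s * α) * z = 0 := by
      rw [map_sub, sub_mul, map_mul, mul_assoc, ← h, sub_self]
    have h3 : z = algebraMap K (GWA K q a) ((α - s * α)⁻¹)
        * (algebraMap K (GWA K q a) (α - s * α) * z) := by
      rw [← mul_assoc, ← map_mul, inv_mul_cancel₀ hne, map_one, one_mul]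
    rw [h2, mul_zero] at h3
    exact h3
  have hx0 : ψ g0 = 0 := by
    refine gen_kill q (ψ g0) hq1 ?_
    have e := congrArg ψ rel_xh
    rw [map_mul, map_smul, map_mul, hψh, Algebra.smul_def, ← Algebra.commutes α (ψ g0)] at e
    exact e
  have hy0 : ψ g1 = 0 := by
    refine gen_kill q⁻¹ (ψ g1) (fun h => hq1 (by rw [← inv_inv q, h, inv_one])) ?_
    have e := congrArg ψ rel_yh
    rw [map_mul, map_smul, map_mul, hψh, Algebra.smul_def, ← Algebra.commutes α (ψ g1)] at e
    exact e
  have hψg3 : ψ g3 = algebraMap K (GWA K q a) α⁻¹ := by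
    have e : algebraMap K (GWA K q a) α * ψ g3 = 1 := by
      have := congrArg ψ rel_hinv
      rwa [map_mul, map_one, hψh] at this
    calc ψ g3 = (algebraMap K (GWA K q a) α⁻¹ * algebraMap K (GWA K q a) α) * ψ g3 := by
          rw [← map_mul, inv_mul_cancel₀ hα, map_one, one_mul]
      _ = algebraMap K (GWA K q a) α⁻¹ * (algebraMap K (GWA K q a) α * ψ g3) := by rw [mul_assoc]
      _ = algebraMap K (GWA K q a) α⁻¹ := by rw [e, mul_one]
  have root : ∀ s : K, (s = q ∨ s = 1) → (a.sum fun i c => c * s ^ i * α ^ i) = 0 := by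
    intro s hs
    refine gwa_algebraMap_inj q hq0 a _ ?_
    have e1 : algebraMap K (GWA K q a) (a.sum fun i c => c * s ^ i * α ^ i)
        = ψ (evalP a s g2 g3) := by
      rw [map_evalP ψ a s g2 g3, hψh, hψg3, evalP_scalar (A := GWA K q a) a s α]
    rcases hs with rfl | rfl
    · rw [e1, ← rel_xy, map_mul, hx0, zero_mul]
    · rw [e1, ← rel_yx, map_mul, hy0, zero_mul]
  refine ⟨hx0, hy0, ?_, ?_⟩
  · have := root 1 (Or.inr rfl)
    rw [← this]
    exact Finsupp.sum_congr fun i _ => by rw [one_zpow, mul_one]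
  · have := root q (Or.inl rfl)
    rw [← this]
    exact Finsupp.sum_congr fun i _ => by rw [mul_zpow, mul_assoc]
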